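/- Let P ⊆ M_ℝ be a reflexive polytope, F a facet of P with inner normal η_F, and m a lattice point on the boundary of P with η_F(m) = 0. Then m is contained in some facet of P that intersects F in a face of codimension two. -/

import Mathlib

open Pointwise Matrix

/-- Ambient space `ℝ^d`. -/
abbrev E (d : ℕ) := Fin d → ℝ

/-- A point of the lattice `M ≅ ℤ^d`. -/
def IsLatticePt {d : ℕ} (x : E d) : Prop := ∀ i, ∃ n : ℤ, x i = (n : ℝ)

/-- The standard pairing between `N_ℝ` and `M_ℝ`. -/
def dot {d : ℕ} (x y : E d) : ℝ := ∑ i, x i * y i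

/-- The dual (polar) polytope `P* = {x : ⟨x,y⟩ ≥ -1 ∀ y ∈ P}`. -/
def polarDual {d : ℕ} (P : Set (E d)) : Set (E d) := {x | ∀ y ∈ P, -1 ≤ dot x y}

/-- A lattice polytope: convex hull of finitely many lattice points. -/
def IsLatticePolytope {d : ℕ} (P : Set (E d)) : Prop :=
  ∃ S : Finset (E d), (∀ x ∈ S, IsLatticePt x) ∧ P = convexHull ℝ (S : Set (E d))

/-- A reflexive polytope: a lattice polytope with `0` in its interior whose polar dual is
again a lattice polytope (i.e. the hull of its lattice points). -/
def IsReflexive {d : ℕ} (P : Set (E d)) : Prop :=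
  IsLatticePolytope P ∧ 0 ∈ interior P ∧
    polarDual P = convexHull ℝ {x | x ∈ polarDual P ∧ IsLatticePt x}

/-- A facet: a nonempty exposed face of dimension `d - 1`. -/
def IsFacet {d : ℕ} (P F : Set (E d)) : Prop :=
  IsExposed ℝ P F ∧ F.Nonempty ∧
    Module.finrank ℝ (affineSpan ℝ F).direction = d - 1

/-- Simplicial polytope: every facet is a simplex (hull of `d` affinely independent points). -/
def IsSimplicial {d : ℕ} (P : Set (E d)) : Prop :=
  ∀ F, IsFacet P F → ∃ v : Fin d → E d,
    AffineIndependent ℝ v ∧ F = convexHull ℝ (Set.range v)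

/-- Pseudo-symmetric: some facet `F` has `-F` also a facet. -/
def IsPseudoSymmetric {d : ℕ} (P : Set (E d)) : Prop :=
  ∃ F, IsFacet P F ∧ IsFacet P (-F)

/-- Application of an integer matrix to a point of `ℝ^d`. -/
def applyU {d : ℕ} (U : Matrix (Fin d) (Fin d) ℤ) (x : E d) : E d :=
  (U.map (Int.cast : ℤ → ℝ)) *ᵥ x

/-- Wirth matrix: block form `[[2·Id_f, 0], [C, Id_{d-f}]]` with `C` a `{0,1}`-matrix
each of whose columns has an odd number of `1`'s. -/
def IsWirth {d : ℕ} (A : Matrix (Fin d) (Fin d) ℤ) : Prop :=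
  ∃ f : ℕ, f < d ∧
    (∀ i j : Fin d, (i : ℕ) < f → (j : ℕ) < f → A i j = if i = j then 2 else 0) ∧
    (∀ i j : Fin d, (i : ℕ) < f → f ≤ (j : ℕ) → A i j = 0) ∧
    (∀ i j : Fin d, f ≤ (i : ℕ) → (j : ℕ) < f → A i j = 0 ∨ A i j = 1) ∧
    (∀ i j : Fin d, f ≤ (i : ℕ) → f ≤ (j : ℕ) → A i j = if i = j then 1 else 0) ∧
    (∀ j : Fin d, (j : ℕ) < f →
      Odd (Finset.univ.filter (fun i : Fin d => f ≤ (i : ℕ) ∧ A i j = 1)).card)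

section Aux
open Set Module

variable {d : ℕ}

/-- `dot c` as a linear map. -/
def dotL (c : E d) : E d →ₗ[ℝ] ℝ where
  toFun := dot c
  map_add' x y := by
    simp only [dot, Pi.add_apply, mul_add, Finset.sum_add_distrib]
  map_smul' a x := by
    simp only [dot, Pi.smul_apply, smul_eq_mul, RingHom.id_apply, Finset.mul_sum]
    exact Finset.sum_congr rfl fun i _ => by ring

@[simp] lemma dotL_apply (c x : E d) : dotL c x = dot c x := rfl

lemma dot_comm (c x : E d) : dot c x = dot x c := by
  simp only [dot]; exact Finset.sum_congr rfl fun i _ => mul_comm _ _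

lemma dot_add_right (c x y : E d) : dot c (x + y) = dot c x + dot c y :=
  (dotL c).map_add x y

lemma dot_smul_right (c : E d) (a : ℝ) (x : E d) : dot c (a • x) = a * dot c x :=
  (dotL c).map_smul a x

lemma dot_sub_right (c x y : E d) : dot c (x - y) = dot c x - dot c y :=
  (dotL c).map_sub x y

lemma dot_self_nonneg (x : E d) : 0 ≤ dot x x :=
  Finset.sum_nonneg fun i _ => mul_self_nonneg _

lemma dot_self_eq_zero {x : E d} (h : dot x x = 0) : x = 0 := by
  funext i
  have h0 : ∀ j ∈ Finset.univ, (0:ℝ) ≤ x j * x j := fun j _ => mul_self_nonneg _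
  have := (Finset.sum_eq_zero_iff_of_nonneg h0).1 h i (Finset.mem_univ i)
  have := mul_self_eq_zero.1 this
  simpa using this

lemma dot_pos_self {x : E d} (h : x ≠ 0) : 0 < dot x x :=
  lt_of_le_of_ne (dot_self_nonneg x) (fun h' => h (dot_self_eq_zero h'.symm))

lemma dot_int {u m : E d} (hu : IsLatticePt u) (hm : IsLatticePt m) :
    ∃ k : ℤ, dot u m = (k : ℝ) := by
  classical
  choose a ha using hu
  choose b hb using hm
  refine ⟨∑ i, a i * b i, ?_⟩
  simp only [dot, Int.cast_sum, Int.cast_mul]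
  exact Finset.sum_congr rfl fun i _ => by rw [ha i, hb i]

/-- `dot c` as a continuous linear map. -/
noncomputable def dotCLM (c : E d) : E d →L[ℝ] ℝ :=
  LinearMap.toContinuousLinearMap (dotL c)

@[simp] lemma dotCLM_apply (c x : E d) : dotCLM c x = dot c x := rfl

lemma isLinearMap_dot (c : E d) : IsLinearMap ℝ (dot c) :=
  ⟨dot_add_right c, fun a x => dot_smul_right c a x⟩

/-- Upper bound on a convex hull from an upper bound on the generators. -/
lemma dot_le_on_hull {W : Set (E d)} {c : E d} {M : ℝ} (h : ∀ w ∈ W, dot c w ≤ M) :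
    ∀ x ∈ convexHull ℝ W, dot c x ≤ M := by
  intro x hx
  have : convexHull ℝ W ⊆ {y | dot c y ≤ M} :=
    convexHull_min h (convex_halfSpace_le (isLinearMap_dot c) M)
  exact this hx

lemma dot_eq_on_hull {W : Set (E d)} {c : E d} {M : ℝ} (h : ∀ w ∈ W, dot c w = M) :
    ∀ x ∈ convexHull ℝ W, dot c x = M := fun x hx =>
  le_antisymm (dot_le_on_hull (fun w hw => (h w hw).le) x hx)
    (by
      have : convexHull ℝ W ⊆ {y | M ≤ dot c y} :=
        convexHull_min (fun w hw => (h w hw).ge) (convex_halfSpace_ge (isLinearMap_dot c) M)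
      exact this hx)

end Aux

noncomputable section Faces
open Set Module

variable {d : ℕ}

lemma dot_zero_left (x : E d) : dot (0 : E d) x = 0 := by simp [dot]

lemma dot_sub_left (u v x : E d) : dot (u - v) x = dot u x - dot v x := by
  rw [dot_comm, dot_sub_right, dot_comm x u, dot_comm x v]

lemma dot_smul_left (a : ℝ) (u x : E d) : dot (a • u) x = a * dot u x := by
  rw [dot_comm, dot_smul_right, dot_comm x u]

/-- The face of the polytope `convexHull ↑W` in direction `c` (the argmax set). -/
def faceOf (W : Finset (E d)) (c : E d) : Set (E d) :=
  {x ∈ convexHull ℝ (W : Set (E d)) | ∀ y ∈ convexHull ℝ (W : Set (E d)), dot c y ≤ dot c x}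

lemma faceOf_subset (W : Finset (E d)) (c : E d) : faceOf W c ⊆ convexHull ℝ ↑W :=
  fun _ hx => hx.1

lemma isExposed_faceOf (W : Finset (E d)) (c : E d) :
    IsExposed ℝ (convexHull ℝ (W : Set (E d))) (faceOf W c) :=
  fun _ => ⟨dotCLM c, rfl⟩

/-- Main structure of the face: its value, vertex description. -/
lemma faceOf_spec {W : Finset (E d)} (hW : W.Nonempty) (c : E d) :
    ∃ M : ℝ, (∀ w ∈ W, dot c w ≤ M) ∧
      (W.filter fun w => dot c w = M).Nonempty ∧
      faceOf W c = {x ∈ convexHull ℝ (W : Set (E d)) | dot c x = M} ∧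
      faceOf W c = convexHull ℝ ((W.filter fun w => dot c w = M) : Set (E d)) := by
  classical
  obtain ⟨w0, hw0W, hw0⟩ := Finset.exists_max_image W (fun w => dot c w) hW
  set M := dot c w0 with hM
  have hle : ∀ w ∈ W, dot c w ≤ M := hw0
  have hmemhull : (w0 : E d) ∈ convexHull ℝ (W : Set (E d)) :=
    subset_convexHull ℝ _ (by exact_mod_cast hw0W)
  have hface_eq : faceOf W c = {x ∈ convexHull ℝ (W : Set (E d)) | dot c x = M} := by
    ext x
    constructor
    · rintro ⟨hx, hmax⟩
      exact ⟨hx, le_antisymm (dot_le_on_hull hle x hx) (hmax w0 hmemhull)⟩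
    · rintro ⟨hx, hxM⟩
      exact ⟨hx, fun y hy => by rw [hxM]; exact dot_le_on_hull hle y hy⟩
  refine ⟨M, hle, ⟨w0, Finset.mem_filter.2 ⟨hw0W, rfl⟩⟩, hface_eq, ?_⟩
  rw [hface_eq]
  ext x
  constructor
  · rintro ⟨hx, hxM⟩
    rw [Finset.convexHull_eq] at hx
    obtain ⟨wt, hwt0, hwt1, hx_eq⟩ := hx
    have hxsum : x = ∑ y ∈ W, wt y • y := by
      rw [← hx_eq, Finset.centerMass_eq_of_sum_1 _ _ hwt1]; rfl
    have hdotx : dot c x = ∑ y ∈ W, wt y * dot c y := by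
      rw [hxsum]
      rw [show dot c (∑ y ∈ W, wt y • y) = (dotL c) (∑ y ∈ W, wt y • y) from rfl, map_sum]
      exact Finset.sum_congr rfl fun y _ => dot_smul_right c (wt y) y
    have hzero : ∑ y ∈ W, wt y * (M - dot c y) = 0 := by
      have : ∑ y ∈ W, wt y * (M - dot c y)
          = (∑ y ∈ W, wt y) * M - ∑ y ∈ W, wt y * dot c y := by
        rw [Finset.sum_mul, ← Finset.sum_sub_distrib]
        exact Finset.sum_congr rfl fun y _ => by ring
      rw [this, hwt1, ← hdotx, hxM]; ring
    have hkey : ∀ y ∈ W, wt y ≠ 0 → dot c y = M := by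
      intro y hy hwy
      have h0 := (Finset.sum_eq_zero_iff_of_nonneg
        (fun y hy => mul_nonneg (hwt0 y hy) (sub_nonneg.2 (hle y hy)))).1 hzero y hy
      rcases mul_eq_zero.1 h0 with h | h
      · exact absurd h hwy
      · linarith [sub_eq_zero.1 h]
    have hxc : x = (W.filter fun y => wt y ≠ 0).centerMass wt id := by
      rw [Finset.centerMass_filter_ne_zero, hx_eq]
    rw [hxc]
    refine Finset.centerMass_mem_convexHull _ (fun y hy => hwt0 y (Finset.mem_filter.1 hy).1)
      ?_ ?_
    · have : ∑ y ∈ W.filter (fun y => wt y ≠ 0), wt y = 1 := by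
        rw [Finset.sum_filter_ne_zero, hwt1]
      rw [this]; norm_num
    · intro y hy
      obtain ⟨hyW, hwy⟩ := Finset.mem_filter.1 hy
      exact Finset.mem_coe.2 (Finset.mem_filter.2 ⟨hyW, hkey y hyW hwy⟩)
  · intro hx
    have hsub : ((W.filter fun w => dot c w = M) : Set (E d)) ⊆ (W : Set (E d)) := by
      intro w hw; exact Finset.mem_coe.2 (Finset.mem_filter.1 (Finset.mem_coe.1 hw)).1
    refine ⟨convexHull_mono hsub hx, ?_⟩
    exact dot_eq_on_hull (fun w hw => (Finset.mem_filter.1 (Finset.mem_coe.1 hw)).2) x hx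

lemma vectorSpan_le_ker {G : Set (E d)} {c : E d} {γ : ℝ} (h : ∀ x ∈ G, dot c x = γ) :
    vectorSpan ℝ G ≤ LinearMap.ker (dotL c) := by
  rw [vectorSpan_def, Submodule.span_le]
  rintro v ⟨x, hx, y, hy, rfl⟩
  simp only [SetLike.mem_coe, LinearMap.mem_ker, vsub_eq_sub, dotL_apply, dot_sub_right]
  rw [h x hx, h y hy, sub_self]

lemma ker_finrank {c : E d} (hc : c ≠ 0) :
    finrank ℝ (LinearMap.ker (dotL c)) = d - 1 := by
  have hr : LinearMap.range (dotL c) = ⊤ := by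
    rw [LinearMap.range_eq_top]
    intro r
    refine ⟨(r / dot c c) • c, ?_⟩
    have := dot_pos_self hc
    simp only [dotL_apply, dot_smul_right]
    field_simp
  have h2 := LinearMap.finrank_range_add_finrank_ker (dotL c)
  rw [hr, finrank_top] at h2
  have : finrank ℝ (E d) = d := by
    simp [Module.finrank_pi]
  rw [this] at h2
  have h1 : finrank ℝ ℝ = 1 := Module.finrank_self ℝ
  rw [h1] at h2
  omega

lemma finrank_E : finrank ℝ (E d) = d := by simp [Module.finrank_pi]

lemma dot_proportional {u v : E d} (hu : u ≠ 0)
    (h : LinearMap.ker (dotL u) ≤ LinearMap.ker (dotL v)) : ∃ t : ℝ, v = t • u := by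
  have duu : 0 < dot u u := dot_pos_self hu
  set t := dot v u / dot u u with ht
  refine ⟨t, ?_⟩
  set w := v - t • u with hw
  have hwz : ∀ z : E d, dot w z = 0 := by
    intro z
    set z' := z - (dot u z / dot u u) • u with hz'
    have hz'ker : z' ∈ LinearMap.ker (dotL u) := by
      simp only [LinearMap.mem_ker, dotL_apply, hz', dot_sub_right, dot_smul_right]
      field_simp
      ring
    have hwu : dot w u = 0 := by
      simp only [hw, dot_sub_left, dot_smul_left, ht]
      field_simp
      ring
    have hwz' : dot w z' = 0 := by
      have hvz' : dot v z' = 0 := h hz'ker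
      have huz' : dot u z' = 0 := hz'ker
      simp only [hw, dot_sub_left, dot_smul_left, hvz', huz', mul_zero, sub_zero]
    have : z = z' + (dot u z / dot u u) • u := by rw [hz']; abel
    rw [this, dot_add_right, hwz', dot_smul_right, hwu, mul_zero, add_zero]
  have : w = 0 := dot_self_eq_zero (hwz w)
  exact sub_eq_zero.1 this

lemma normal_unique {G : Set (E d)} (hGne : G.Nonempty)
    (hdim : finrank ℝ (vectorSpan ℝ G) = d - 1)
    {u u' : E d} (hu : ∀ x ∈ G, dot u x = -1) (hu' : ∀ x ∈ G, dot u' x = -1) : u' = u := by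
  obtain ⟨x0, hx0⟩ := hGne
  have hu0 : u ≠ 0 := by
    intro h
    rw [h] at hu
    have := hu x0 hx0
    rw [dot_zero_left] at this
    norm_num at this
  by_cases hv : u' - u = 0
  · exact sub_eq_zero.1 hv
  · exfalso
    have hker_u : vectorSpan ℝ G ≤ LinearMap.ker (dotL u) := vectorSpan_le_ker hu
    have hker_v : vectorSpan ℝ G ≤ LinearMap.ker (dotL (u' - u)) := by
      refine vectorSpan_le_ker (γ := 0) (fun x hx => ?_)
      rw [dot_sub_left, hu x hx, hu' x hx, sub_self]
    have heq : vectorSpan ℝ G = LinearMap.ker (dotL u) := by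
      refine Submodule.eq_of_le_of_finrank_le hker_u ?_
      rw [hdim, ker_finrank hu0]
    obtain ⟨t, htv⟩ := dot_proportional hu0 (heq ▸ hker_v)
    have : dot (u' - u) x0 = 0 := by
      rw [dot_sub_left, hu x0 hx0, hu' x0 hx0, sub_self]
    rw [htv, dot_smul_left, hu x0 hx0] at this
    have ht0 : t = 0 := by linarith
    rw [ht0, zero_smul] at htv
    exact hv htv

end Faces

noncomputable section Intrinsic
open Set Module

variable {d : ℕ}

/-- Metric characterization of the intrinsic interior. -/
lemma mem_intrinsicInterior_iff' {s : Set (E d)} {x : E d} :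
    x ∈ intrinsicInterior ℝ s ↔
      x ∈ affineSpan ℝ s ∧ ∃ ε > (0:ℝ), ∀ y ∈ affineSpan ℝ s, dist y x < ε → y ∈ s := by
  constructor
  · rintro hx
    rw [intrinsicInterior] at hx
    obtain ⟨z, hz, rfl⟩ := hx
    have hz' : ((↑) ⁻¹' s : Set <| affineSpan ℝ s) ∈ nhds z := mem_interior_iff_mem_nhds.1 hz
    obtain ⟨ε, hε, hball⟩ := Metric.mem_nhds_iff.1 hz'
    refine ⟨z.2, ε, hε, fun y hy hdist => ?_⟩
    have : (⟨y, hy⟩ : affineSpan ℝ s) ∈ Metric.ball z ε := by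
      rw [Metric.mem_ball, Subtype.dist_eq]
      exact hdist
    exact hball this
  · rintro ⟨hx, ε, hε, hball⟩
    rw [intrinsicInterior]
    refine ⟨⟨x, hx⟩, ?_, rfl⟩
    rw [mem_interior_iff_mem_nhds, Metric.mem_nhds_iff]
    refine ⟨ε, hε, fun z hz => ?_⟩
    rw [Metric.mem_ball, Subtype.dist_eq] at hz
    exact hball z z.2 hz

/-- One can move slightly beyond an intrinsic-interior point within the set. -/
lemma exists_extend_beyond {s : Set (E d)} {x r : E d}
    (hx : x ∈ intrinsicInterior ℝ s) (hr : r ∈ s) :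
    ∃ ε : ℝ, 0 < ε ∧ x + ε • (x - r) ∈ s := by
  obtain ⟨hxs, ε₀, hε₀, hball⟩ := mem_intrinsicInterior_iff'.1 hx
  by_cases hxr : x - r = 0
  · refine ⟨1, one_pos, ?_⟩
    rw [hxr, smul_zero, add_zero]
    exact intrinsicInterior_subset hx
  · have hnorm : 0 < ‖x - r‖ := norm_pos_iff.2 hxr
    refine ⟨ε₀ / (2 * ‖x - r‖), by positivity, ?_⟩
    have hxspan : x ∈ affineSpan ℝ s := hxs
    have hrspan : r ∈ affineSpan ℝ s := subset_affineSpan ℝ s hr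
    have hdir : x - r ∈ (affineSpan ℝ s).direction := by
      have := AffineSubspace.vsub_mem_direction hxspan hrspan
      simpa using this
    have hmem : x + (ε₀ / (2 * ‖x - r‖)) • (x - r) ∈ affineSpan ℝ s := by
      have : (ε₀ / (2 * ‖x - r‖)) • (x - r) ∈ (affineSpan ℝ s).direction :=
        Submodule.smul_mem _ _ hdir
      have h2 := AffineSubspace.vadd_mem_of_mem_direction this hxspan
      simpa [vadd_eq_add, add_comm] using h2
    refine hball _ hmem ?_
    have heq : x + (ε₀ / (2 * ‖x - r‖)) • (x - r) - x = (ε₀ / (2 * ‖x - r‖)) • (x - r) := by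
      abel
    rw [dist_eq_norm, heq, norm_smul, Real.norm_eq_abs, abs_of_pos (by positivity)]
    rw [div_mul_eq_mul_div, div_lt_iff₀ (by positivity)]
    nlinarith
lemma dot_const_of_relint_max {s : Set (E d)} {c : E d} {γ : ℝ} {x : E d}
    (hmax : ∀ y ∈ s, dot c y ≤ γ) (hx : x ∈ intrinsicInterior ℝ s) (hxγ : dot c x = γ) :
    ∀ y ∈ s, dot c y = γ := by
  intro y hy
  obtain ⟨ε, hε, hz⟩ := exists_extend_beyond hx hy
  have := hmax _ hz
  rw [dot_add_right, dot_smul_right, dot_sub_right, hxγ] at this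
  have h2 := hmax y hy
  nlinarith

lemma extreme_superset {A G R : Set (E d)} (hG : IsExtreme ℝ A G) (hR : R ⊆ A) {z : E d}
    (hz : z ∈ intrinsicInterior ℝ R) (hzG : z ∈ G) : R ⊆ G := by
  intro r hr
  by_cases hrz : r = z
  · rw [hrz]; exact hzG
  · obtain ⟨ε, hε, hy⟩ := exists_extend_beyond hz hr
    set y := z + ε • (z - r) with hy_def
    have hseg : z ∈ openSegment ℝ r y := by
      refine ⟨ε / (1 + ε), 1 / (1 + ε), by positivity, by positivity, ?_, ?_⟩
      · field_simp
        ring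
      · funext i
        simp only [hy_def, Pi.add_apply, Pi.smul_apply, Pi.sub_apply, smul_eq_mul]
        field_simp
        ring
    exact (hG.2 (hR hr) (hR hy) hzG hseg)

/-- Existence of a supporting functional at a point of the relative boundary. -/
lemma exists_support {C : Set (E d)} (hC : Convex ℝ C) {y : E d} (hyC : y ∈ C)
    (hy : y ∉ intrinsicInterior ℝ C) :
    ∃ c : E d, (∀ x ∈ C, dot c x ≤ dot c y) ∧ ∃ x ∈ C, dot c x < dot c y := by
  classical
  set V := (affineSpan ℝ C).direction with hV
  set D : Set V := {v : V | (v : E d) + y ∈ C} with hD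
  have hyspan : y ∈ affineSpan ℝ C := subset_affineSpan ℝ C hyC
  have hDconv : Convex ℝ D := by
    intro v1 h1 v2 h2 a b ha hb hab
    have : ((a • v1 + b • v2 : V) : E d) + y = a • ((v1:E d) + y) + b • ((v2:E d) + y) := by
      push_cast
      funext i
      simp only [Pi.add_apply, Pi.smul_apply, smul_eq_mul]
      linear_combination (-(y i)) * hab
    show ((a • v1 + b • v2 : V) : E d) + y ∈ C
    rw [this]
    exact hC h1 h2 ha hb hab
  obtain ⟨w0, hw0⟩ := Set.Nonempty.intrinsicInterior hC ⟨y, hyC⟩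
  have hw0C : w0 ∈ C := intrinsicInterior_subset hw0
  have hv0mem : w0 - y ∈ V := by
    have := AffineSubspace.vsub_mem_direction (subset_affineSpan ℝ C hw0C) hyspan
    simpa using this
  set v0 : V := ⟨w0 - y, hv0mem⟩ with hv0
  have hv0int : v0 ∈ interior D := by
    obtain ⟨_, ε, hε, hball⟩ := mem_intrinsicInterior_iff'.1 hw0
    rw [mem_interior_iff_mem_nhds, Metric.mem_nhds_iff]
    refine ⟨ε, hε, fun v hv => ?_⟩
    rw [Metric.mem_ball, Subtype.dist_eq] at hv
    have hvspan : (v : E d) + y ∈ affineSpan ℝ C := by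
      have h2 := AffineSubspace.vadd_mem_of_mem_direction v.2 hyspan
      simpa [vadd_eq_add, add_comm] using h2
    refine hball _ hvspan ?_
    have : (v : E d) + y - w0 = (v : E d) - (v0 : E d) := by
      rw [hv0]; simp; abel
    rw [dist_eq_norm, this, ← dist_eq_norm]
    exact hv
  have h0not : (0 : V) ∉ interior D := by
    intro h0
    obtain ⟨ε, hε, hball⟩ := Metric.mem_nhds_iff.1 (mem_interior_iff_mem_nhds.1 h0)
    apply hy
    rw [mem_intrinsicInterior_iff']
    refine ⟨hyspan, ε, hε, fun x hxspan hdist => ?_⟩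
    have hxy : x - y ∈ V := by
      have := AffineSubspace.vsub_mem_direction hxspan hyspan
      simpa using this
    have : (⟨x - y, hxy⟩ : V) ∈ Metric.ball (0 : V) ε := by
      rw [Metric.mem_ball, Subtype.dist_eq]
      simp only [ZeroMemClass.coe_zero]
      rw [dist_eq_norm, sub_zero, ← dist_eq_norm]
      exact hdist
    have hx2 : (x - y) + y ∈ C := hball this
    simpa using hx2
  obtain ⟨f, hf⟩ := geometric_hahn_banach_open_point (hDconv.interior) isOpen_interior h0not
  have hfneg : ∀ a ∈ interior D, f a < 0 := by
    intro a ha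
    have := hf a ha
    rwa [map_zero] at this
  have hfD : ∀ a ∈ D, f a ≤ 0 := by
    intro a ha
    by_contra hfa
    push_neg at hfa
    have hfv0 : f v0 < 0 := hfneg v0 hv0int
    set A := -f v0 with hA
    set B := f a with hB
    have hApos : 0 < A := by simp [hA]; linarith
    have hBpos : 0 < B := hfa
    have hseg : (B / (A + B)) • v0 + (A / (A + B)) • a ∈ openSegment ℝ v0 a :=
      ⟨B / (A + B), A / (A + B), by positivity, by positivity,
        by rw [← add_div, add_comm, div_self (by positivity)], rfl⟩
    have hmem := hDconv.openSegment_interior_self_subset_interior hv0int ha hseg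
    have := hfneg _ hmem
    rw [map_add, _root_.map_smul, _root_.map_smul] at this
    simp only [smul_eq_mul] at this
    rw [← hB] at this
    have hexp : B / (A + B) * f v0 + A / (A + B) * B = 0 := by
      rw [show f v0 = -A by rw [hA]; ring]
      field_simp
      ring
    linarith
  -- extend f to the ambient space
  obtain ⟨V', hcompl⟩ := Submodule.exists_isCompl V
  set F : E d →ₗ[ℝ] ℝ := f.toLinearMap ∘ₗ (V.linearProjOfIsCompl V' hcompl) with hF
  have hFV : ∀ v : V, F (v : E d) = f v := by
    intro v
    rw [hF]
    simp [Submodule.linearProjOfIsCompl_apply_left hcompl v]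
    exact congrArg f (Submodule.linearProjOfIsCompl_apply_left hcompl v)
  set c : E d := fun i => F (Pi.single i 1) with hc
  have hdotc : ∀ x : E d, dot c x = F x := by
    intro x
    have hx_decomp : x = ∑ i, x i • (Pi.single i (1:ℝ) : E d) := by
      funext j
      simp [Finset.sum_apply, Pi.single_apply]
    calc dot c x = ∑ i, F (Pi.single i 1) * x i := rfl
      _ = ∑ i, F (x i • (Pi.single i (1:ℝ) : E d)) := by
          refine Finset.sum_congr rfl fun i _ => ?_
          rw [_root_.map_smul]; simp [mul_comm]
      _ = F (∑ i, x i • (Pi.single i (1:ℝ) : E d)) := (map_sum F _ _).symm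
      _ = F x := by rw [← hx_decomp]
  refine ⟨c, ?_, w0, hw0C, ?_⟩
  · intro x hx
    have hxy : x - y ∈ V := by
      have := AffineSubspace.vsub_mem_direction (subset_affineSpan ℝ C hx) hyspan
      simpa using this
    have hmemD : (⟨x - y, hxy⟩ : V) ∈ D := by
      show (x - y) + y ∈ C
      simpa using hx
    have := hfD _ hmemD
    rw [← hFV ⟨x - y, hxy⟩] at this
    simp only at this
    have hsub : dot c x - dot c y = F (x - y) := by
      rw [map_sub, hdotc, hdotc]
    linarith [hsub ▸ this]
  · have hfv0 : f v0 < 0 := hfneg v0 hv0int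
    have : dot c w0 - dot c y = F (w0 - y) := by rw [map_sub, hdotc, hdotc]
    rw [← hFV v0] at hfv0
    simp only [hv0] at hfv0
    linarith [this ▸ hfv0]

end Intrinsic

noncomputable section Enlarge
open Set Module

variable {d : ℕ}

lemma dot_add_left (u v x : E d) : dot (u + v) x = dot u x + dot v x := by
  rw [dot_comm, dot_add_right, dot_comm x u, dot_comm x v]

lemma dot_neg_left (u x : E d) : dot (-u) x = -dot u x := by
  have : -u = (-1 : ℝ) • u := by funext i; simp
  rw [this, dot_smul_left]; ring

lemma vectorSpan_convexHull (s : Set (E d)) :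
    vectorSpan ℝ (convexHull ℝ s) = vectorSpan ℝ s := by
  rw [← direction_affineSpan, affineSpan_convexHull, direction_affineSpan]

/-- A proper face has strictly smaller dimension. -/
lemma face_dim_lt {W : Finset (E d)} (hW : W.Nonempty) {c : E d}
    (hproper : ∃ x ∈ convexHull ℝ (W : Set (E d)), x ∉ faceOf W c) :
    finrank ℝ (vectorSpan ℝ (faceOf W c)) < finrank ℝ (vectorSpan ℝ (W : Set (E d))) := by
  classical
  obtain ⟨M, hle, hAne, hdesc, hhull⟩ := faceOf_spec hW c
  have hsub : vectorSpan ℝ (faceOf W c) ≤ vectorSpan ℝ (W : Set (E d)) := by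
    have h1 : vectorSpan ℝ (faceOf W c) ≤ vectorSpan ℝ (convexHull ℝ (W : Set (E d))) :=
      vectorSpan_mono ℝ (faceOf_subset W c)
    rwa [vectorSpan_convexHull] at h1
  refine lt_of_le_of_ne (Submodule.finrank_mono hsub) (fun heq => ?_)
  have hVeq : vectorSpan ℝ (faceOf W c) = vectorSpan ℝ (W : Set (E d)) :=
    Submodule.eq_of_le_of_finrank_le hsub heq.ge
  have hker : vectorSpan ℝ (W : Set (E d)) ≤ LinearMap.ker (dotL c) := by
    rw [← hVeq]
    refine vectorSpan_le_ker (γ := M) (fun x hx => ?_)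
    exact (hdesc ▸ hx).2
  obtain ⟨a₀, ha₀⟩ := hAne
  obtain ⟨ha₀W, ha₀M⟩ := Finset.mem_filter.1 ha₀
  have hallM : ∀ w ∈ W, dot c w = M := by
    intro w hw
    have hmem : w - a₀ ∈ vectorSpan ℝ (W : Set (E d)) := by
      have := vsub_mem_vectorSpan ℝ (Finset.mem_coe.2 hw) (Finset.mem_coe.2 ha₀W)
      simpa using this
    have : dot c (w - a₀) = 0 := hker hmem
    rw [dot_sub_right, ha₀M] at this
    linarith
  obtain ⟨x, hxhull, hxface⟩ := hproper
  exact hxface (hdesc ▸ ⟨hxhull, dot_eq_on_hull hallM x hxhull⟩)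

/-- Auxiliary step: rotating a face towards a new vertex. -/
lemma face_improve_aux {W : Finset (E d)} (hW : W.Nonempty) {c cp : E d} {M γ' : ℝ}
    (hle : ∀ w ∈ W, dot c w ≤ M)
    (hAne : (W.filter fun w => dot c w = M).Nonempty)
    (hγ' : ∀ a ∈ W.filter (fun w => dot c w = M), dot cp a = γ')
    (hccp : dot c cp = 0) (hcpcp : 0 < dot cp cp)
    (hcpV : cp ∈ vectorSpan ℝ (W : Set (E d)))
    (hex : ∃ w ∈ W, γ' < dot cp w) :
    ∃ c₂ : E d, (∃ x ∈ convexHull ℝ (W : Set (E d)), x ∉ faceOf W c₂) ∧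
      faceOf W c ⊆ faceOf W c₂ ∧
      ∃ w₂ ∈ W, w₂ ∈ faceOf W c₂ ∧ γ' < dot cp w₂ := by
  classical
  set A := W.filter (fun w => dot c w = M) with hA
  set X := W.filter (fun w => dot c w < M ∧ γ' < dot cp w) with hX
  have hXne : X.Nonempty := by
    obtain ⟨w₁, hw₁W, hw₁⟩ := hex
    have hw₁M : dot c w₁ < M := by
      rcases lt_or_eq_of_le (hle w₁ hw₁W) with h | h
      · exact h
      · exfalso
        have : w₁ ∈ A := Finset.mem_filter.2 ⟨hw₁W, h⟩
        have := hγ' w₁ this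
        linarith
    exact ⟨w₁, Finset.mem_filter.2 ⟨hw₁W, hw₁M, hw₁⟩⟩
  obtain ⟨ws, hwsX, hmin⟩ :=
    Finset.exists_min_image X (fun w => (M - dot c w) / (dot cp w - γ')) hXne
  obtain ⟨hwsW, hwsM, hwsγ⟩ := Finset.mem_filter.1 hwsX
  set θ := (M - dot c ws) / (dot cp ws - γ') with hθ
  have hθpos : 0 < θ := div_pos (by linarith) (by linarith)
  set c₂ := c + θ • cp with hc₂
  set M₂ := M + θ * γ' with hM₂
  have hdot₂ : ∀ x : E d, dot c₂ x = dot c x + θ * dot cp x := by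
    intro x
    rw [hc₂, dot_add_left, dot_smul_left]
  have hle₂ : ∀ w ∈ W, dot c₂ w ≤ M₂ := by
    intro w hw
    rw [hdot₂, hM₂]
    rcases eq_or_lt_of_le (hle w hw) with h | h
    · have hwA : w ∈ A := Finset.mem_filter.2 ⟨hw, h⟩
      rw [hγ' w hwA, h]
    · by_cases hcpw : dot cp w ≤ γ'
      · have := mul_le_mul_of_nonneg_left hcpw hθpos.le
        linarith
      · push_neg at hcpw
        have hwX : w ∈ X := Finset.mem_filter.2 ⟨hw, h, hcpw⟩
        have hthis := hmin w hwX
        have h2 : θ * (dot cp w - γ') ≤ M - dot c w := by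
          rw [le_div_iff₀ (by linarith)] at hthis
          linarith [hthis]
        nlinarith
  have hA₂ : ∀ a ∈ A, dot c₂ a = M₂ := by
    intro a ha
    obtain ⟨haW, haM⟩ := Finset.mem_filter.1 ha
    rw [hdot₂, haM, hγ' a ha, hM₂]
  have hws₂ : dot c₂ ws = M₂ := by
    have hden : dot cp ws - γ' ≠ 0 := by linarith
    have hkey : θ * (dot cp ws - γ') = M - dot c ws := by
      rw [hθ, div_mul_cancel₀ _ hden]
    rw [hdot₂, hM₂]
    nlinarith [hkey]
  -- description of faceOf W c₂
  obtain ⟨M', hle', hA'ne, hdesc', hhull'⟩ := faceOf_spec hW c₂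
  obtain ⟨a₀, ha₀⟩ := hAne
  have hM'eq : M' = M₂ := by
    obtain ⟨w', hw'⟩ := hA'ne
    obtain ⟨hw'W, hw'M⟩ := Finset.mem_filter.1 hw'
    have h1 : M' ≤ M₂ := hw'M ▸ hle₂ w' hw'W
    have h2 : M₂ ≤ M' := (hA₂ a₀ ha₀) ▸ hle' a₀ (Finset.mem_filter.1 ha₀).1
    linarith
  -- description of faceOf W c
  obtain ⟨M₀, hle₀, hA₀ne, hdesc₀, hhull₀⟩ := faceOf_spec hW c
  have hM₀eq : M₀ = M := by
    obtain ⟨w', hw'⟩ := hA₀ne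
    obtain ⟨hw'W, hw'M⟩ := Finset.mem_filter.1 hw'
    have h1 : M₀ ≤ M := hw'M ▸ hle w' hw'W
    have h2 : M ≤ M₀ :=
      (Finset.mem_filter.1 ha₀).2 ▸ hle₀ a₀ (Finset.mem_filter.1 ha₀).1
    linarith
  refine ⟨c₂, ?_, ?_, ws, hwsW, ?_, hwsγ⟩
  · -- properness
    have hexlt : ∃ w ∈ W, dot c₂ w < M₂ := by
      by_contra hcon
      push_neg at hcon
      have hall : ∀ w ∈ W, dot c₂ w = M₂ := fun w hw =>
        le_antisymm (hle₂ w hw) (hcon w hw)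
      have hker : vectorSpan ℝ (W : Set (E d)) ≤ LinearMap.ker (dotL c₂) :=
        vectorSpan_le_ker (γ := M₂) (fun x hx => hall x (Finset.mem_coe.1 hx))
      have h0 : dot c₂ cp = 0 := hker hcpV
      rw [hdot₂] at h0
      nlinarith
    obtain ⟨w', hw'W, hw'⟩ := hexlt
    refine ⟨w', subset_convexHull ℝ _ (Finset.mem_coe.2 hw'W), fun hmem => ?_⟩
    rw [hdesc'] at hmem
    rw [hM'eq] at hmem
    exact absurd hmem.2 (ne_of_lt hw')
  · -- monotonicity
    intro x hx
    have hx' := hx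
    rw [hhull₀] at hx'
    have hxhull : x ∈ convexHull ℝ (W : Set (E d)) := faceOf_subset W c hx
    have hxM : dot c x = M := by
      rw [hdesc₀] at hx
      rw [← hM₀eq]; exact hx.2
    have hxγ : dot cp x = γ' := by
      have hsubA : ∀ a ∈ ((W.filter fun w => dot c w = M₀) : Set (E d)), dot cp a = γ' := by
        intro a ha
        have haA : a ∈ A := by
          rw [hA]
          have hmem := Finset.mem_coe.1 ha
          rw [hM₀eq] at hmem
          exact hmem
        exact hγ' a haA
      exact dot_eq_on_hull (W := ((W.filter fun w => dot c w = M₀) : Set (E d))) hsubA x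
        (hhull₀ ▸ hx)
    rw [hdesc', hM'eq]
    exact ⟨hxhull, by rw [hdot₂, hxM, hxγ]⟩
  · rw [hdesc', hM'eq]
    exact ⟨subset_convexHull ℝ _ (Finset.mem_coe.2 hwsW), hws₂⟩

end Enlarge

noncomputable section Improve
open Set Module

variable {d : ℕ}

/-- Existence of a vector orthogonal (w.r.t. `dot`) to a small subspace and to `c`,
inside a bigger subspace. -/
lemma exists_perp {V0 V : Submodule ℝ (E d)} (c : E d)
    (hdim : finrank ℝ V0 + 1 < finrank ℝ V) :
    ∃ cp : E d, cp ∈ V ∧ cp ≠ 0 ∧ dot c cp = 0 ∧ ∀ v ∈ V0, dot cp v = 0 := by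
  classical
  set r := finrank ℝ V0 with hr
  set b := Module.finBasis ℝ V0 with hb
  set L : V →ₗ[ℝ] (Fin r → ℝ) × ℝ :=
    LinearMap.prod
      (LinearMap.pi (fun i => (dotL ((b i : V0) : E d)).comp V.subtype))
      ((dotL c).comp V.subtype) with hL
  have hker : LinearMap.ker L ≠ ⊥ := by
    intro hkbot
    have h1 := LinearMap.finrank_range_add_finrank_ker L
    rw [hkbot, finrank_bot, add_zero] at h1
    have h2 : finrank ℝ (LinearMap.range L) ≤ finrank ℝ ((Fin r → ℝ) × ℝ) :=
      Submodule.finrank_le _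
    rw [h1] at h2
    rw [Module.finrank_prod, Module.finrank_pi, Module.finrank_self] at h2
    simp only [Fintype.card_fin] at h2
    omega
  obtain ⟨x, hxker, hxne⟩ := (Submodule.ne_bot_iff _).1 hker
  refine ⟨(x : E d), x.2, by simpa using hxne, ?_, ?_⟩
  · have := congrArg Prod.snd (LinearMap.mem_ker.1 hxker)
    simpa [hL] using this
  · intro v hv
    have hcomp : ∀ i : Fin r, dot ((b i : V0) : E d) (x : E d) = 0 := by
      intro i
      have := congrArg (fun p => p.1 i) (LinearMap.mem_ker.1 hxker)
      simpa [hL] using this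
    -- express v in the basis
    set v' : V0 := ⟨v, hv⟩ with hv'
    have hrepr : (∑ i, b.repr v' i • (b i)) = v' := b.sum_repr v'
    have hcoe : (v : E d) = ∑ i, b.repr v' i • ((b i : V0) : E d) := by
      have := congrArg (Subtype.val) hrepr
      simp only [Submodule.coe_sum, Submodule.coe_smul] at this
      exact this.symm
    rw [dot_comm]
    rw [hcoe]
    rw [show dot (∑ i, b.repr v' i • ((b i : V0) : E d)) (x : E d)
        = ∑ i, b.repr v' i * dot ((b i : V0) : E d) (x : E d) from ?_]
    · exact Finset.sum_eq_zero fun i _ => by rw [hcomp i, mul_zero]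
    · rw [dot_comm, show dot (x : E d) (∑ i, b.repr v' i • ((b i : V0) : E d))
          = (dotL (x : E d)) (∑ i, b.repr v' i • ((b i : V0) : E d)) from rfl, map_sum]
      refine Finset.sum_congr rfl fun i _ => ?_
      rw [dotL_apply, dot_smul_right, dot_comm (x : E d) _]

/-- One can strictly increase the dimension of a proper face while keeping it proper. -/
lemma face_improve {W : Finset (E d)} (hW : W.Nonempty) {c : E d}
    (hproper : ∃ x ∈ convexHull ℝ (W : Set (E d)), x ∉ faceOf W c)
    (hdim : finrank ℝ (vectorSpan ℝ (faceOf W c)) + 1 <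
      finrank ℝ (vectorSpan ℝ (W : Set (E d)))) :
    ∃ c₂ : E d, (∃ x ∈ convexHull ℝ (W : Set (E d)), x ∉ faceOf W c₂) ∧
      faceOf W c ⊆ faceOf W c₂ ∧
      finrank ℝ (vectorSpan ℝ (faceOf W c)) < finrank ℝ (vectorSpan ℝ (faceOf W c₂)) := by
  classical
  obtain ⟨M, hle, hAne, hdesc, hhull⟩ := faceOf_spec hW c
  set A := W.filter (fun w => dot c w = M) with hA
  obtain ⟨a₀, ha₀⟩ := hAne
  have hVface : vectorSpan ℝ (faceOf W c) = vectorSpan ℝ (A : Set (E d)) := by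
    rw [hhull, vectorSpan_convexHull]
  -- the perturbation vector
  obtain ⟨cp, hcpV, hcpne, hccp, hcpV0⟩ :=
    exists_perp (V0 := vectorSpan ℝ (A : Set (E d)))
      (V := vectorSpan ℝ (W : Set (E d))) c (by rw [← hVface]; exact hdim)
  have hcpcp : 0 < dot cp cp := dot_pos_self hcpne
  set γ' := dot cp a₀ with hγ'def
  have hγ' : ∀ a ∈ A, dot cp a = γ' := by
    intro a ha
    have hmem : a - a₀ ∈ vectorSpan ℝ (A : Set (E d)) := by
      have := vsub_mem_vectorSpan ℝ (Finset.mem_coe.2 ha) (Finset.mem_coe.2 ha₀)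
      simpa using this
    have := hcpV0 _ hmem
    rw [dot_sub_right] at this
    linarith
  -- not all vertices have pairing γ'
  have hnotall : ∃ w ∈ W, dot cp w ≠ γ' := by
    by_contra hcon
    push_neg at hcon
    have hker : vectorSpan ℝ (W : Set (E d)) ≤ LinearMap.ker (dotL cp) :=
      vectorSpan_le_ker (γ := γ') (fun x hx => hcon x (Finset.mem_coe.1 hx))
    have : dot cp cp = 0 := hker hcpV
    linarith
  -- final dimension increase, shared by both cases
  have hfinish : ∀ c₂ : E d,
      (∃ x ∈ convexHull ℝ (W : Set (E d)), x ∉ faceOf W c₂) →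
      faceOf W c ⊆ faceOf W c₂ →
      (∃ w₂ ∈ W, w₂ ∈ faceOf W c₂ ∧ dot cp w₂ ≠ γ') →
      ∃ c₂ : E d, (∃ x ∈ convexHull ℝ (W : Set (E d)), x ∉ faceOf W c₂) ∧
        faceOf W c ⊆ faceOf W c₂ ∧
        finrank ℝ (vectorSpan ℝ (faceOf W c)) < finrank ℝ (vectorSpan ℝ (faceOf W c₂)) := by
    rintro c₂ hproper₂ hmono ⟨w₂, hw₂W, hw₂face, hw₂γ⟩
    refine ⟨c₂, hproper₂, hmono, ?_⟩
    have hsub : vectorSpan ℝ (faceOf W c) ≤ vectorSpan ℝ (faceOf W c₂) :=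
      vectorSpan_mono ℝ hmono
    refine lt_of_le_of_ne (Submodule.finrank_mono hsub) (fun heq => ?_)
    have hVeq : vectorSpan ℝ (faceOf W c) = vectorSpan ℝ (faceOf W c₂) :=
      Submodule.eq_of_le_of_finrank_le hsub heq.ge
    have ha₀face : a₀ ∈ faceOf W c := by
      rw [hhull]
      exact subset_convexHull ℝ _ (Finset.mem_coe.2 ha₀)
    have hmem : w₂ - a₀ ∈ vectorSpan ℝ (faceOf W c₂) := by
      have := vsub_mem_vectorSpan ℝ hw₂face (hmono ha₀face)
      simpa using this
    rw [← hVeq, hVface] at hmem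
    have := hcpV0 _ hmem
    rw [dot_sub_right] at this
    exact hw₂γ (by linarith)
  obtain ⟨w₁, hw₁W, hw₁γ⟩ := hnotall
  rcases lt_or_gt_of_ne hw₁γ with hlt | hgt
  · -- use -cp
    have hγ'neg : ∀ a ∈ W.filter (fun w => dot c w = M), dot (-cp) a = -γ' := by
      intro a ha
      rw [dot_neg_left, hγ' a ha]
    have hccpneg : dot c (-cp) = 0 := by
      rw [dot_comm, dot_neg_left, dot_comm cp c, hccp, neg_zero]
    have hcpcpneg : 0 < dot (-cp) (-cp) := by
      rw [dot_neg_left, dot_comm, dot_neg_left, dot_comm cp cp]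
      simpa using hcpcp
    have hcpVneg : -cp ∈ vectorSpan ℝ (W : Set (E d)) := Submodule.neg_mem _ hcpV
    have hexneg : ∃ w ∈ W, -γ' < dot (-cp) w := by
      refine ⟨w₁, hw₁W, ?_⟩
      rw [dot_neg_left]
      linarith
    obtain ⟨c₂, hproper₂, hmono, w₂, hw₂W, hw₂face, hw₂γ⟩ :=
      face_improve_aux hW hle ⟨a₀, ha₀⟩ hγ'neg hccpneg hcpcpneg hcpVneg hexneg
    refine hfinish c₂ hproper₂ hmono ⟨w₂, hw₂W, hw₂face, ?_⟩
    rw [dot_neg_left] at hw₂γ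
    intro h
    rw [h] at hw₂γ
    linarith
  · -- use cp
    obtain ⟨c₂, hproper₂, hmono, w₂, hw₂W, hw₂face, hw₂γ⟩ :=
      face_improve_aux hW hle ⟨a₀, ha₀⟩ hγ' hccp hcpcp hcpV ⟨w₁, hw₁W, hgt⟩
    exact hfinish c₂ hproper₂ hmono ⟨w₂, hw₂W, hw₂face, ne_of_gt hw₂γ⟩

/-- Every proper face is contained in a proper face of codimension one. -/
lemma face_to_facet {W : Finset (E d)} (hW : W.Nonempty) :
    ∀ n : ℕ, ∀ c : E d, (∃ x ∈ convexHull ℝ (W : Set (E d)), x ∉ faceOf W c) →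
      finrank ℝ (vectorSpan ℝ (W : Set (E d))) - 1
        - finrank ℝ (vectorSpan ℝ (faceOf W c)) ≤ n →
      ∃ c₂ : E d, (∃ x ∈ convexHull ℝ (W : Set (E d)), x ∉ faceOf W c₂) ∧
        faceOf W c ⊆ faceOf W c₂ ∧
        finrank ℝ (vectorSpan ℝ (faceOf W c₂))
          = finrank ℝ (vectorSpan ℝ (W : Set (E d))) - 1 := by
  intro n
  induction n with
  | zero =>
    intro c hproper hbound
    have hlt := face_dim_lt hW hproper
    exact ⟨c, hproper, subset_rfl, by omega⟩
  | succ n ih =>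
    intro c hproper hbound
    have hlt := face_dim_lt hW hproper
    by_cases heq : finrank ℝ (vectorSpan ℝ (faceOf W c))
        = finrank ℝ (vectorSpan ℝ (W : Set (E d))) - 1
    · exact ⟨c, hproper, subset_rfl, heq⟩
    · have hdim : finrank ℝ (vectorSpan ℝ (faceOf W c)) + 1 <
          finrank ℝ (vectorSpan ℝ (W : Set (E d))) := by omega
      obtain ⟨c₂, hproper₂, hmono₂, hgrow⟩ := face_improve hW hproper hdim
      obtain ⟨c₃, hproper₃, hmono₃, heq₃⟩ := ih c₂ hproper₂ (by omega)
      exact ⟨c₃, hproper₃, hmono₂.trans hmono₃, heq₃⟩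

end Improve

noncomputable section Helpers
open Set Module

variable {d : ℕ}

lemma dot_zero_right (c : E d) : dot c 0 = 0 := by simp [dot]

lemma eqOn_affineSpan_level {s : Set (E d)} (f : E d →ₗ[ℝ] ℝ) {β : ℝ}
    (h : ∀ x ∈ s, f x = β) : ∀ x ∈ affineSpan ℝ s, f x = β := by
  intro x hx
  refine affineSpan_induction (k := ℝ) (p := fun z => f z = β) hx h ?_
  intro c u v w hu hv hw
  have : f (c • (u - v) + w) = c * (f u - f v) + f w := by
    rw [map_add, _root_.map_smul, map_sub]; simp
  simpa [hu, hv, hw] using this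

lemma affineSpan_eq_top_of_zero_mem_interior {P : Set (E d)} (h0 : 0 ∈ interior P) :
    affineSpan ℝ P = ⊤ := by
  obtain ⟨ε, hε, hball⟩ := Metric.mem_nhds_iff.1 (mem_interior_iff_mem_nhds.1 h0)
  have h0P : (0 : E d) ∈ P := interior_subset h0
  have hdir : ∀ v : E d, v ∈ (affineSpan ℝ P).direction := by
    intro v
    by_cases hv : v = 0
    · rw [hv]; exact Submodule.zero_mem _
    · have hnorm : 0 < ‖v‖ := norm_pos_iff.2 hv
      set u := (ε / (2 * ‖v‖)) • v with hu
      have huP : u ∈ P := by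
        refine hball ?_
        rw [Metric.mem_ball, dist_eq_norm, sub_zero, hu, norm_smul, Real.norm_eq_abs,
          abs_of_pos (by positivity)]
        rw [div_mul_eq_mul_div, mul_comm]
        rw [div_lt_iff₀ (by positivity)]
        nlinarith
      have humem : u - 0 ∈ (affineSpan ℝ P).direction := by
        have := AffineSubspace.vsub_mem_direction
          (subset_affineSpan ℝ P huP) (subset_affineSpan ℝ P h0P)
        simpa using this
      rw [sub_zero] at humem
      have : v = (2 * ‖v‖ / ε) • u := by
        rw [hu, smul_smul]
        rw [show 2 * ‖v‖ / ε * (ε / (2 * ‖v‖)) = 1 by field_simp]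
        rw [one_smul]
      rw [this]
      exact Submodule.smul_mem _ _ humem
  refine SetLike.ext fun x => ?_
  simp only [AffineSubspace.mem_top, iff_true]
  have : x - 0 ∈ (affineSpan ℝ P).direction := hdir _
  have h2 := AffineSubspace.vadd_mem_of_mem_direction this (subset_affineSpan ℝ P h0P)
  simpa using h2

lemma intrinsicInterior_subset_interior {P : Set (E d)} (h0 : 0 ∈ interior P) :
    intrinsicInterior ℝ P ⊆ interior P := by
  intro x hx
  obtain ⟨hxspan, ε, hε, hball⟩ := mem_intrinsicInterior_iff'.1 hx
  rw [mem_interior_iff_mem_nhds, Metric.mem_nhds_iff]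
  refine ⟨ε, hε, fun y hy => ?_⟩
  refine hball y ?_ (Metric.mem_ball.1 hy)
  rw [affineSpan_eq_top_of_zero_mem_interior h0]
  trivial

/-- Any non-interior point of a polytope lies on a face of codimension one. -/
lemma exists_codim_one_face {W : Finset (E d)} (hW : W.Nonempty) {y : E d}
    (hy : y ∈ convexHull ℝ (W : Set (E d)))
    (hyni : y ∉ intrinsicInterior ℝ (convexHull ℝ (W : Set (E d)))) :
    ∃ c₂ : E d, y ∈ faceOf W c₂ ∧ (∃ x ∈ convexHull ℝ (W : Set (E d)), x ∉ faceOf W c₂) ∧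
      finrank ℝ (vectorSpan ℝ (faceOf W c₂))
        = finrank ℝ (vectorSpan ℝ (W : Set (E d))) - 1 := by
  obtain ⟨c, hmax, x0, hx0, hstrict⟩ :=
    exists_support (convex_convexHull ℝ (W : Set (E d))) hy hyni
  have hyface : y ∈ faceOf W c := ⟨hy, fun z hz => hmax z hz⟩
  have hproper : ∃ x ∈ convexHull ℝ (W : Set (E d)), x ∉ faceOf W c := by
    refine ⟨x0, hx0, fun hmem => ?_⟩
    have := hmem.2 y hy
    linarith
  obtain ⟨c₂, hproper₂, hmono₂, heq₂⟩ :=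
    face_to_facet hW (finrank ℝ (vectorSpan ℝ (W : Set (E d))) - 1
      - finrank ℝ (vectorSpan ℝ (faceOf W c))) c hproper le_rfl
  exact ⟨c₂, hmono₂ hyface, hproper₂, heq₂⟩

lemma inf_ker_finrank {η u y1 : E d} (hne : u ≠ η) (hηy : dot η y1 = -1)
    (huy : dot u y1 = -1) :
    finrank ℝ ((LinearMap.ker (dotL η)) ⊓ (LinearMap.ker (dotL u)) : Submodule ℝ (E d))
      ≤ d - 2 := by
  have hη0 : η ≠ 0 := by
    intro h; rw [h, dot_zero_left] at hηy; norm_num at hηy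
  by_contra hcon
  push_neg at hcon
  set K := (LinearMap.ker (dotL η)) ⊓ (LinearMap.ker (dotL u)) with hK
  have h1 : finrank ℝ K ≤ d - 1 := by
    have := Submodule.finrank_mono (inf_le_left :
      K ≤ LinearMap.ker (dotL η))
    rwa [ker_finrank hη0] at this
  have heq : finrank ℝ K = d - 1 := by omega
  have hKeq : K = LinearMap.ker (dotL η) := by
    refine Submodule.eq_of_le_of_finrank_le inf_le_left ?_
    rw [ker_finrank hη0, heq]
  have hsub : LinearMap.ker (dotL η) ≤ LinearMap.ker (dotL u) := by
    rw [← hKeq]; exact inf_le_right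
  obtain ⟨t, htu⟩ := dot_proportional hη0 hsub
  rw [htu, dot_smul_left, hηy] at huy
  have ht1 : t = 1 := by linarith
  rw [ht1, one_smul] at htu
  exact hne htu

end Helpers

set_option maxHeartbeats 1600000 in
theorem reflexive_zero_pairing_adjacent_facet (d : ℕ) (P F : Set (E d))
    (hP : IsReflexive P) (hF : IsFacet P F) (η m : E d)
    (hη : ∀ y ∈ F, dot η y = -1) (hηP : ∀ y ∈ P, -1 ≤ dot η y)
    (hm : IsLatticePt m) (hmb : m ∈ frontier P) (hm0 : dot η m = 0) :
    ∃ G, IsFacet P G ∧ m ∈ G ∧ (F ∩ G).Nonempty ∧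
      Module.finrank ℝ (affineSpan ℝ (F ∩ G)).direction = d - 2 := by
  classical
  obtain ⟨⟨S, hSlat, hPS⟩, h0int, hdual⟩ := hP
  obtain ⟨hFexp, hFne, hFrank⟩ := hF
  rw [direction_affineSpan] at hFrank
  obtain ⟨y₀, hy₀F⟩ := hFne
  have hPconv : Convex ℝ P := by rw [hPS]; exact convex_convexHull ℝ _
  have hPcompact : IsCompact P := by rw [hPS]; exact S.finite_toSet.isCompact_convexHull ℝ
  have hPclosed : IsClosed P := hPcompact.isClosed
  have h0P : (0 : E d) ∈ P := interior_subset h0int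
  have hSne : S.Nonempty := by
    rcases S.eq_empty_or_nonempty with h | h
    · exfalso
      rw [h] at hPS
      simp only [Finset.coe_empty, convexHull_empty] at hPS
      rw [hPS] at h0P
      exact h0P
    · exact h
  have hη0 : η ≠ 0 := by
    intro h
    have := hη y₀ hy₀F
    rw [h, dot_zero_left] at this
    norm_num at this
  have hmP : m ∈ P := hPclosed.frontier_subset hmb
  have hmne : m ≠ 0 := by
    intro h
    rw [h] at hmb
    exact hmb.2 h0int
  have hFP : F ⊆ P := hFexp.subset
  have hFne' : F.Nonempty := ⟨y₀, hy₀F⟩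
  -- F is the η-face of the polytope
  obtain ⟨Mη, hMle, hMne, hMdesc, hMhull⟩ := faceOf_spec hSne (-η)
  have hMη : Mη = 1 := by
    obtain ⟨w', hw'⟩ := hMne
    obtain ⟨hw'S, hw'M⟩ := Finset.mem_filter.1 hw'
    have h1 : Mη ≤ 1 := by
      rw [← hw'M, dot_neg_left]
      have hw'P : w' ∈ P := by
        rw [hPS]; exact subset_convexHull ℝ _ (Finset.mem_coe.2 hw'S)
      linarith [hηP w' hw'P]
    have h2 : (1:ℝ) ≤ Mη := by
      have hy₀hull : y₀ ∈ convexHull ℝ (S : Set (E d)) := by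
        rw [← hPS]; exact hFP hy₀F
      have := dot_le_on_hull hMle y₀ hy₀hull
      rw [dot_neg_left, hη y₀ hy₀F] at this
      linarith
    linarith
  have hF'desc : faceOf S (-η) = {x ∈ P | dot η x = -1} := by
    rw [hMdesc, hMη, ← hPS]
    ext x
    simp only [Set.mem_setOf_eq, dot_neg_left]
    constructor
    · rintro ⟨h1, h2⟩; exact ⟨h1, by linarith⟩
    · rintro ⟨h1, h2⟩; exact ⟨h1, by linarith⟩
  have hFF' : F ⊆ faceOf S (-η) := by
    intro x hx
    rw [hF'desc]
    exact ⟨hFP hx, hη x hx⟩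
  have hvsF_le : vectorSpan ℝ F ≤ LinearMap.ker (dotL η) := vectorSpan_le_ker hη
  have hvsF : vectorSpan ℝ F = LinearMap.ker (dotL η) :=
    Submodule.eq_of_le_of_finrank_le hvsF_le (by rw [ker_finrank hη0, hFrank])
  have hvsF'_le : vectorSpan ℝ (faceOf S (-η)) ≤ LinearMap.ker (dotL η) := by
    refine vectorSpan_le_ker (γ := -1) ?_
    intro x hx
    rw [hF'desc] at hx
    exact hx.2
  have hspanFF' : affineSpan ℝ F = affineSpan ℝ (faceOf S (-η)) := by
    refine AffineSubspace.ext_of_direction_eq ?_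
      ⟨y₀, subset_affineSpan _ _ hy₀F, subset_affineSpan _ _ (hFF' hy₀F)⟩
    rw [direction_affineSpan, direction_affineSpan]
    refine le_antisymm (vectorSpan_mono ℝ hFF') ?_
    rw [hvsF]
    exact hvsF'_le
  have hF'F : faceOf S (-η) ⊆ F := by
    obtain ⟨l, hl⟩ := hFexp hFne'
    have hlconst : ∀ x ∈ F, (l : E d →ₗ[ℝ] ℝ) x = l y₀ := by
      intro x hx
      have h1 : l y₀ ≤ l x := (hl ▸ hx).2 y₀ (hFP hy₀F)
      have h2 : l x ≤ l y₀ := (hl ▸ hy₀F).2 x (hFP hx)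
      simp only [ContinuousLinearMap.coe_coe]
      linarith
    intro x hx
    have hxspan : x ∈ affineSpan ℝ F := by
      rw [hspanFF']
      exact subset_affineSpan ℝ _ hx
    have hxl := eqOn_affineSpan_level (l : E d →ₗ[ℝ] ℝ) hlconst x hxspan
    simp only [ContinuousLinearMap.coe_coe] at hxl
    rw [hl]
    refine ⟨(hF'desc ▸ hx).1, fun y hy => ?_⟩
    have := (hl ▸ hy₀F).2 y hy
    linarith
  have hFeqF' : F = faceOf S (-η) := le_antisymm hFF' hF'F
  have hFdesc : F = {x ∈ P | dot η x = -1} := by rw [hFeqF', hF'desc]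
  set Wf := S.filter (fun w => dot (-η) w = Mη) with hWf
  have hWfne : Wf.Nonempty := hMne
  have hFhull : F = convexHull ℝ (Wf : Set (E d)) := by rw [hFeqF', hMhull]
  have hmem_span_iff : ∀ x : E d, x ∈ affineSpan ℝ F ↔ dot η x = -1 := by
    intro x
    constructor
    · intro hx
      exact eqOn_affineSpan_level (dotL η) hη x hx
    · intro hx
      have hker : x - y₀ ∈ LinearMap.ker (dotL η) := by
        simp only [LinearMap.mem_ker, dotL_apply, dot_sub_right, hx, hη y₀ hy₀F, sub_self]
      rw [← hvsF, ← direction_affineSpan] at hker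
      have h2 := AffineSubspace.vadd_mem_of_mem_direction hker (subset_affineSpan ℝ F hy₀F)
      simpa using h2
  have hFconv : Convex ℝ F := by rw [hFhull]; exact convex_convexHull ℝ _
  obtain ⟨w0, hw0⟩ := Set.Nonempty.intrinsicInterior hFconv hFne'
  have hw0F : w0 ∈ F := intrinsicInterior_subset hw0
  -- the curve s
  set sc : ℝ → E d := fun t => (1 - t)⁻¹ • (w0 + t • (m - w0)) with hsc
  have hsdot : ∀ t : ℝ, t < 1 → dot η (sc t) = -1 := by
    intro t ht
    rw [hsc]
    simp only
    rw [dot_smul_right, dot_add_right, dot_smul_right, dot_sub_right, hη w0 hw0F, hm0]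
    have h1t : 1 - t ≠ 0 := by intro h; linarith [(sub_eq_zero.1 h)]
    field_simp
    ring
  have hs0 : sc 0 = w0 := by
    rw [hsc]; simp
  obtain ⟨xm, hxmP, hxmmax⟩ := hPcompact.exists_isMaxOn ⟨0, h0P⟩ continuous_norm.continuousOn
  set ρ := ‖xm‖ with hρ
  have hρbound : ∀ x ∈ P, ‖x‖ ≤ ρ := fun x hx => hxmmax hx
  have hρ0 : 0 ≤ ρ := norm_nonneg _
  have hμ : 0 < ‖m‖ := norm_pos_iff.2 hmne
  set β := (ρ + ‖w0‖) / (‖m‖ + ρ + ‖w0‖) with hβ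
  have hβ1 : β < 1 := by
    rw [hβ, div_lt_one (by positivity)]
    linarith
  have hβ0 : 0 ≤ β := by positivity
  have hFbound : ∀ t : ℝ, 0 ≤ t → t < 1 → sc t ∈ F → t ≤ β := by
    intro t ht0 ht1 hstF
    have hsnorm : ‖sc t‖ ≤ ρ := hρbound _ (hFP hstF)
    have hid : w0 + t • (m - w0) = (1 - t) • sc t := by
      rw [hsc]
      simp only
      rw [smul_smul, mul_inv_cancel₀ (by intro h; linarith [(sub_eq_zero.1 h)]), one_smul]
    have h2 : ‖w0 + t • (m - w0)‖ ≤ (1 - t) * ρ := by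
      rw [hid, norm_smul, Real.norm_eq_abs, abs_of_pos (by linarith)]
      exact mul_le_mul_of_nonneg_left hsnorm (by linarith)
    have h3 : t * ‖m‖ - (1 - t) * ‖w0‖ ≤ ‖w0 + t • (m - w0)‖ := by
      have hrw : w0 + t • (m - w0) = t • m - -((1 - t) • w0) := by
        funext i
        simp only [Pi.add_apply, Pi.sub_apply, Pi.neg_apply, Pi.smul_apply, smul_eq_mul]
        ring
      rw [hrw]
      have h4 := norm_sub_norm_le (t • m) (-((1 - t) • w0))
      rw [norm_neg] at h4
      have h5 : ‖t • m‖ = t * ‖m‖ := by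
        rw [norm_smul, Real.norm_eq_abs, abs_of_nonneg ht0]
      have h6 : ‖(1 - t) • w0‖ = (1 - t) * ‖w0‖ := by
        rw [norm_smul, Real.norm_eq_abs, abs_of_nonneg (by linarith)]
      linarith
    rw [hβ, le_div_iff₀ (by positivity)]
    nlinarith
  set T := {t : ℝ | t ∈ Set.Icc (0:ℝ) β ∧ sc t ∈ F} with hT
  have hT0 : (0:ℝ) ∈ T := ⟨⟨le_refl 0, hβ0⟩, by rw [hs0]; exact hw0F⟩
  have hFclosed : IsClosed F := by
    rw [hFhull]
    exact (Wf.finite_toSet.isCompact_convexHull ℝ).isClosed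
  have hTclosed : IsClosed T := by
    have hcont : ContinuousOn sc (Set.Icc (0:ℝ) β) := by
      apply ContinuousOn.fun_smul
      · apply ContinuousOn.inv₀
        · exact continuousOn_const.sub continuousOn_id
        · intro t ht h
          have : t < 1 := lt_of_le_of_lt ht.2 hβ1
          have := sub_eq_zero.1 h
          linarith
      · exact continuousOn_const.add (continuousOn_id.smul continuousOn_const)
    have := hcont.preimage_isClosed_of_isClosed isClosed_Icc hFclosed
    convert this using 1
    exact hT
  have hTbdd : BddAbove T := ⟨β, fun t ht => ht.1.2⟩
  set t1 := sSup T with ht1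
  have ht1T : t1 ∈ T := hTclosed.csSup_mem ⟨0, hT0⟩ hTbdd
  have ht1le : t1 ≤ β := ht1T.1.2
  have ht1lt1 : t1 < 1 := lt_of_le_of_lt ht1le hβ1
  have ht10 : 0 ≤ t1 := ht1T.1.1
  set y1 := sc t1 with hy1
  have hy1F : y1 ∈ F := ht1T.2
  have hy1ni : y1 ∉ intrinsicInterior ℝ F := by
    intro hy1i
    obtain ⟨_, ε, hε, hball⟩ := mem_intrinsicInterior_iff'.1 hy1i
    have hcont : ContinuousAt sc t1 := by
      have h1 : ContinuousAt (fun t : ℝ => (1 - t)⁻¹) t1 := by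
        refine ContinuousAt.inv₀ (continuousAt_const.sub continuousAt_id) ?_
        intro h
        have := sub_eq_zero.1 h
        linarith
      exact h1.smul (continuousAt_const.add (continuousAt_id.smul continuousAt_const))
    obtain ⟨δ, hδ, hd2⟩ := Metric.continuousAt_iff.1 hcont ε hε
    set t2 := min (t1 + δ / 2) ((t1 + 1) / 2) with ht2
    have ht2gt : t1 < t2 := by
      rw [ht2]
      exact lt_min (by linarith) (by linarith)
    have ht2lt : t2 < 1 := by
      have h := min_le_right (t1 + δ / 2) ((t1 + 1) / 2)
      rw [ht2]
      linarith
    have ht2dist : dist t2 t1 < δ := by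
      rw [Real.dist_eq, abs_of_pos (by linarith)]
      have h := min_le_left (t1 + δ / 2) ((t1 + 1) / 2)
      rw [ht2]
      linarith
    have hst2 : sc t2 ∈ F := by
      refine hball (sc t2) ?_ (hd2 ht2dist)
      rw [hmem_span_iff]
      exact hsdot t2 ht2lt
    have ht2T : t2 ∈ T := ⟨⟨by linarith, hFbound t2 (by linarith) ht2lt hst2⟩, hst2⟩
    have := le_csSup hTbdd ht2T
    linarith
  have ht1pos : 0 < t1 := by
    rcases eq_or_lt_of_le ht10 with h | h
    · exfalso
      apply hy1ni
      rw [hy1, ← h, hs0]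
      exact hw0
    · exact h
  -- the ridge R
  have hWfvs : Module.finrank ℝ (vectorSpan ℝ (Wf : Set (E d))) = d - 1 := by
    have hvw : vectorSpan ℝ (Wf : Set (E d)) = vectorSpan ℝ F := by
      rw [hFhull, vectorSpan_convexHull]
    rw [hvw, hFrank]
  obtain ⟨cR, hy1R, hRproper, hRrank⟩ :=
    exists_codim_one_face hWfne (y := y1) (by rw [← hFhull]; exact hy1F)
      (by rw [← hFhull]; exact hy1ni)
  set R := faceOf Wf cR with hR
  have hRsub : R ⊆ F := by rw [hFhull]; exact faceOf_subset _ _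
  have hd : 0 < d := by
    by_contra hd0
    push_neg at hd0
    have hd' : d = 0 := by omega
    have := hη y₀ hy₀F
    have hz : dot η y₀ = 0 := by
      rw [dot]
      subst hd'
      simp
    rw [hz] at this
    norm_num at this
  have hRrank' : Module.finrank ℝ (vectorSpan ℝ R) = d - 2 := by
    rw [hRrank, hWfvs]
    omega
  obtain ⟨MR, hMRle, hMRne, hMRdesc, hMRhull⟩ := faceOf_spec hWfne cR
  have hRconv : Convex ℝ R := by rw [hR, hMRhull]; exact convex_convexHull ℝ _
  obtain ⟨z, hz⟩ := Set.Nonempty.intrinsicInterior hRconv ⟨y1, hy1R⟩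
  have hzR : z ∈ R := intrinsicInterior_subset hz
  have hzF : z ∈ F := hRsub hzR
  have hzni : z ∉ intrinsicInterior ℝ F := by
    intro hzi
    have hzMR : dot cR z = MR := by
      have h := hzR
      rw [hR, hMRdesc] at h
      exact h.2
    have hmaxF : ∀ x ∈ F, dot cR x ≤ MR := by
      intro x hx
      rw [hFhull] at hx
      exact dot_le_on_hull hMRle x hx
    have hconst := dot_const_of_relint_max hmaxF hzi hzMR
    obtain ⟨x, hxhull, hxR⟩ := hRproper
    apply hxR
    rw [hR, hMRdesc]
    refine ⟨hxhull, hconst x ?_⟩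
    rw [hFhull]
    exact hxhull
  -- approximating sequence from outside
  have hz_seq : ∀ n : ℕ, ∃ y', y' ∈ affineSpan ℝ F ∧
      dist y' z < 1/(n+1) ∧ y' ∉ F := by
    intro n
    by_contra hcon
    push_neg at hcon
    apply hzni
    rw [mem_intrinsicInterior_iff']
    exact ⟨subset_affineSpan ℝ _ hzF, 1/(n+1), by positivity,
      fun y hy hdist => hcon y hy hdist⟩
  choose zs hzspan hzdist hznF using hz_seq
  have hPnhds : P ∈ nhds 0 := mem_interior_iff_mem_nhds.1 h0int
  have habs : Absorbent ℝ P := absorbent_nhds_zero hPnhds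
  have hzsnotP : ∀ n, zs n ∉ P := by
    intro n hmem
    apply hznF n
    rw [hFdesc]
    exact ⟨hmem, (hmem_span_iff _).1 (hzspan n)⟩
  have hgauge1 : ∀ n, 1 < gauge P (zs n) := by
    intro n
    by_contra hle
    push_neg at hle
    refine hzsnotP n ?_
    have := (gauge_le_one_iff_mem_closure hPconv hPnhds).1 hle
    rwa [hPclosed.closure_eq] at this
  set b : ℕ → E d := fun n => (gauge P (zs n))⁻¹ • zs n with hb
  have hgpos : ∀ n, 0 < gauge P (zs n) := fun n => lt_trans one_pos (hgauge1 n)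
  have hbfront : ∀ n, b n ∈ frontier P := by
    intro n
    refine mem_frontier_of_gauge_eq_one hPconv h0P habs ?_
    rw [hb]
    simp only
    rw [gauge_smul_of_nonneg (inv_nonneg.2 (hgpos n).le), smul_eq_mul]
    exact inv_mul_cancel₀ (ne_of_gt (hgpos n))
  have hbdotη : ∀ n, dot η (b n) = -(gauge P (zs n))⁻¹ := by
    intro n
    rw [hb]
    simp only
    rw [dot_smul_right, (hmem_span_iff _).1 (hzspan n)]
    ring
  have hbF : ∀ n, b n ∉ F := by
    intro n hbn
    have h1 := hη _ hbn
    rw [hbdotη n] at h1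
    have h2 : (gauge P (zs n))⁻¹ < 1 := by
      rw [inv_lt_one_iff₀]
      right
      exact hgauge1 n
    linarith
  have hbP : ∀ n, b n ∈ P := fun n => hPclosed.frontier_subset (hbfront n)
  have hbni : ∀ n, b n ∉ intrinsicInterior ℝ P := by
    intro n hbi
    exact (hbfront n).2 (intrinsicInterior_subset_interior h0int hbi)
  have hSvs : Module.finrank ℝ (vectorSpan ℝ (S : Set (E d))) = d := by
    have h2 : affineSpan ℝ (S : Set (E d)) = ⊤ := by
      have h3 := affineSpan_eq_top_of_zero_mem_interior (P := P) h0int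
      rw [hPS, affineSpan_convexHull] at h3
      exact h3
    rw [← direction_affineSpan, h2, AffineSubspace.direction_top, finrank_top, finrank_E]
  have hbface : ∀ n : ℕ, ∃ c₂ : E d, b n ∈ faceOf S c₂ ∧
      (∃ x ∈ convexHull ℝ (S : Set (E d)), x ∉ faceOf S c₂) ∧
      Module.finrank ℝ (vectorSpan ℝ (faceOf S c₂))
        = Module.finrank ℝ (vectorSpan ℝ (S : Set (E d))) - 1 := by
    intro n
    refine exists_codim_one_face hSne ?_ ?_
    · rw [← hPS]; exact hbP n
    · rw [← hPS]; exact hbni n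
  choose cB hcB1 hcB2 hcB3 using hbface
  -- pigeonhole over vertex sets
  set TB : ℕ → Finset (E d) := fun n => S.filter (fun w => w ∈ faceOf S (cB n)) with hTB
  have hTBface : ∀ n, faceOf S (cB n) = convexHull ℝ ((TB n : Set (E d))) := by
    intro n
    obtain ⟨MB, hMBle, hMBne, hMBdesc, hMBhull⟩ := faceOf_spec hSne (cB n)
    have heq : TB n = S.filter (fun w => dot (cB n) w = MB) := by
      apply Finset.ext
      intro w
      simp only [hTB, Finset.mem_filter]
      constructor
      · rintro ⟨hwS, hwface⟩
        exact ⟨hwS, (hMBdesc ▸ hwface).2⟩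
      · rintro ⟨hwS, hwdot⟩
        exact ⟨hwS, hMBdesc ▸ ⟨subset_convexHull ℝ _ (Finset.mem_coe.2 hwS), hwdot⟩⟩
    rw [heq, ← hMBhull]
  set g : ℕ → {T : Finset (E d) // T ∈ S.powerset} :=
    fun n => ⟨TB n, Finset.mem_powerset.2 (Finset.filter_subset _ _)⟩ with hg
  obtain ⟨Tv, hTv⟩ := Finite.exists_infinite_fiber g
  have hI : (g ⁻¹' {Tv} : Set ℕ).Infinite := Set.infinite_coe_iff.1 hTv
  obtain ⟨n₀, hn₀⟩ := hI.nonempty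
  have hTn : ∀ n ∈ (g ⁻¹' {Tv} : Set ℕ), TB n = Tv.1 := fun n hn =>
    congrArg Subtype.val (Set.mem_singleton_iff.1 hn)
  set G := faceOf S (cB n₀) with hG
  have hGsame : ∀ n ∈ (g ⁻¹' {Tv} : Set ℕ), faceOf S (cB n) = G := by
    intro n hn
    rw [hG, hTBface n, hTBface n₀, hTn n hn, hTn n₀ hn₀]
  have hbG : ∀ n ∈ (g ⁻¹' {Tv} : Set ℕ), b n ∈ G := fun n hn =>
    (hGsame n hn) ▸ hcB1 n
  -- convergence of b to z
  have hzsz : Filter.Tendsto zs Filter.atTop (nhds z) := by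
    rw [tendsto_iff_dist_tendsto_zero]
    refine squeeze_zero (fun n => dist_nonneg) (fun n => (hzdist n).le) ?_
    exact tendsto_one_div_add_atTop_nhds_zero_nat
  have hgz : gauge P z = 1 := by
    have hle : gauge P z ≤ 1 := gauge_le_one_of_mem (hFP hzF)
    rcases lt_or_eq_of_le hle with hlt | heq
    · exfalso
      have hzint : z ∈ interior P := (gauge_lt_one_iff_mem_interior hPconv hPnhds).1 hlt
      obtain ⟨ε, hε, hball⟩ := Metric.mem_nhds_iff.1 (mem_interior_iff_mem_nhds.1 hzint)
      have hηnorm : 0 < ‖η‖ := norm_pos_iff.2 hη0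
      set p := z - (ε / (2 * ‖η‖)) • η with hp
      have hpP : p ∈ P := by
        refine hball ?_
        rw [Metric.mem_ball, dist_eq_norm, hp,
          show z - (ε / (2 * ‖η‖)) • η - z = -((ε / (2 * ‖η‖)) • η) by abel,
          norm_neg, norm_smul, Real.norm_eq_abs, abs_of_pos (by positivity),
          div_mul_eq_mul_div, div_lt_iff₀ (by positivity)]
        nlinarith
      have hple := hηP p hpP
      rw [hp, dot_sub_right, dot_smul_right] at hple
      have hzdot : dot η z = -1 := hη z hzF
      have hηη : 0 < dot η η := dot_pos_self hη0
      rw [hzdot] at hple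
      nlinarith [mul_pos (show (0:ℝ) < ε / (2 * ‖η‖) by positivity) hηη]
    · exact heq
  have hgcont : Filter.Tendsto (fun n => gauge P (zs n)) Filter.atTop (nhds 1) := by
    have h1 := ((continuous_gauge hPconv hPnhds).tendsto z).comp hzsz
    rwa [hgz] at h1
  have hbtend : Filter.Tendsto b Filter.atTop (nhds z) := by
    have hinv : Filter.Tendsto (fun n => (gauge P (zs n))⁻¹) Filter.atTop (nhds 1) := by
      have := hgcont.inv₀ one_ne_zero
      rwa [inv_one] at this
    have := hinv.smul hzsz
    rwa [one_smul] at this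
  have hzG : z ∈ G := by
    have hGhull : G = convexHull ℝ (Tv.1 : Set (E d)) := by
      rw [hG, hTBface n₀, hTn n₀ hn₀]
    have hGclosed : IsClosed G := by
      rw [hGhull]
      exact (Tv.1.finite_toSet.isCompact_convexHull ℝ).isClosed
    have hfreq : ∃ᶠ n in Filter.atTop, b n ∈ G := by
      rw [Filter.frequently_atTop]
      intro N
      obtain ⟨n, hnI, hnN⟩ := hI.exists_gt N
      exact ⟨n, hnN.le, hbG n hnI⟩
    have := mem_closure_of_frequently_of_tendsto hfreq hbtend
    rwa [hGclosed.closure_eq] at this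
  -- G is a facet
  have hGP : G ⊆ P := by rw [hG, hPS]; exact faceOf_subset _ _
  have hGexp : IsExposed ℝ P G := by rw [hG, hPS]; exact isExposed_faceOf S (cB n₀)
  have hGrank : Module.finrank ℝ (vectorSpan ℝ G) = d - 1 := by
    rw [hG, hcB3 n₀, hSvs]
  have hGne : G.Nonempty := ⟨b n₀, hcB1 n₀⟩
  have hGfacet : IsFacet P G :=
    ⟨hGexp, hGne, by rw [direction_affineSpan]; exact hGrank⟩
  -- the lattice normal of G
  obtain ⟨MG, hMGle, hMGne, hMGdesc, hMGhull⟩ := faceOf_spec hSne (cB n₀)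
  have hGdesc : G = {x ∈ P | dot (cB n₀) x = MG} := by rw [hG, hMGdesc, hPS]
  have hcB0 : cB n₀ ≠ 0 := by
    intro h
    obtain ⟨x, hxhull, hxface⟩ := hcB2 n₀
    refine hxface ⟨hxhull, fun y hy => ?_⟩
    rw [h, dot_zero_left, dot_zero_left]
  have hMG0 : 0 < MG := by
    have h0hull : (0 : E d) ∈ convexHull ℝ (S : Set (E d)) := by rw [← hPS]; exact h0P
    have h0le : (0:ℝ) ≤ MG := by
      have := dot_le_on_hull hMGle 0 h0hull
      rwa [dot_zero_right] at this
    rcases lt_or_eq_of_le h0le with h | h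
    · exact h
    · exfalso
      obtain ⟨ε, hε, hball⟩ := Metric.mem_nhds_iff.1 hPnhds
      have hcnorm : 0 < ‖cB n₀‖ := norm_pos_iff.2 hcB0
      set p := (ε / (2 * ‖cB n₀‖)) • cB n₀ with hp
      have hpP : p ∈ P := by
        refine hball ?_
        rw [Metric.mem_ball, dist_eq_norm, sub_zero, hp, norm_smul, Real.norm_eq_abs,
          abs_of_pos (by positivity), div_mul_eq_mul_div, div_lt_iff₀ (by positivity)]
        nlinarith
      have hple : dot (cB n₀) p ≤ MG := by
        rw [hPS] at hpP
        exact dot_le_on_hull hMGle p hpP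
      rw [hp, dot_smul_right] at hple
      nlinarith [dot_pos_self hcB0, show (0:ℝ) < ε / (2 * ‖cB n₀‖) by positivity]
  have hMGne0 : MG ≠ 0 := ne_of_gt hMG0
  set u := (-MG⁻¹) • cB n₀ with hu
  have hudot : ∀ x : E d, dot u x = -MG⁻¹ * dot (cB n₀) x := fun x => by
    rw [hu, dot_smul_left]
  have huG : ∀ x ∈ G, dot u x = -1 := by
    intro x hx
    have hx2 : dot (cB n₀) x = MG := by
      have h := hx
      rw [hGdesc] at h
      exact h.2
    rw [hudot x, hx2]
    field_simp
  have huP : ∀ y ∈ P, -1 ≤ dot u y := by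
    intro y hy
    rw [hudot y]
    have hyle : dot (cB n₀) y ≤ MG := by
      rw [hPS] at hy
      exact dot_le_on_hull hMGle y hy
    have h2 := mul_le_mul_of_nonneg_left hyle (le_of_lt (inv_pos.2 hMG0))
    rw [inv_mul_cancel₀ hMGne0] at h2
    nlinarith
  have hGdesc_u : G = {x ∈ P | dot u x = -1} := by
    rw [hGdesc]
    ext x
    simp only [Set.mem_setOf_eq]
    constructor
    · rintro ⟨h1, h2⟩
      refine ⟨h1, ?_⟩
      rw [hudot x, h2]
      field_simp
    · rintro ⟨h1, h2⟩
      refine ⟨h1, ?_⟩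
      rw [hudot x] at h2
      field_simp at h2
      linarith
  have huext : u ∈ Set.extremePoints ℝ (polarDual P) := by
    refine ⟨fun y hy => huP y hy, ?_⟩
    intro x₁ hx₁ x₂ hx₂ hseg
    obtain ⟨a, bb, ha, hbb, hab, hsum⟩ := hseg
    have hkey : ∀ v ∈ G, dot x₁ v = -1 ∧ dot x₂ v = -1 := by
      intro v hv
      have hvP : v ∈ P := hGP hv
      have h1 : -1 ≤ dot x₁ v := hx₁ v hvP
      have h2 : -1 ≤ dot x₂ v := hx₂ v hvP
      have h3 : a * dot x₁ v + bb * dot x₂ v = -1 := by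
        rw [← huG v hv, ← hsum, dot_add_left, dot_smul_left, dot_smul_left]
      constructor <;> nlinarith
    exact normal_unique hGne hGrank huG (fun v hv => (hkey v hv).1)
  have hulat : IsLatticePt u := by
    rw [hdual] at huext
    exact (extremePoints_convexHull_subset huext).2
  -- w0 is not on G
  have hFG : ¬ (∀ x ∈ F, dot u x = -1) := by
    intro hall
    have hueq : u = η := normal_unique hFne' hFrank hη hall
    apply hbF n₀
    rw [hFdesc]
    rw [hGdesc_u] at hbG
    have hb0 := hbG n₀ hn₀
    exact ⟨hb0.1, by rw [← hueq]; exact hb0.2⟩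
  have hw0G : dot u w0 ≠ -1 := by
    intro heq
    apply hFG
    have hmaxF : ∀ x ∈ F, dot (-u) x ≤ 1 := by
      intro x hx
      rw [dot_neg_left]
      linarith [huP x (hFP hx)]
    have hw0max : dot (-u) w0 = 1 := by rw [dot_neg_left, heq]; ring
    have hconst := dot_const_of_relint_max hmaxF hw0 hw0max
    intro x hx
    have := hconst x hx
    rw [dot_neg_left] at this
    linarith
  have hw0gt : -1 < dot u w0 :=
    lt_of_le_of_ne (huP w0 (hFP hw0F)) (Ne.symm hw0G)
  -- transfer R into G
  have hRG : R ⊆ G :=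
    extreme_superset hGexp.isExtreme (fun x hx => hFP (hRsub hx)) hz hzG
  have hy1G : y1 ∈ G := hRG hy1R
  have hy1u : dot u y1 = -1 := huG y1 hy1G
  -- the pairing of u with m is a negative integer
  have hkeyeq : (1 - t1) * dot u y1 = dot u w0 + t1 * (dot u m - dot u w0) := by
    have h1 : (1 - t1) • y1 = w0 + t1 • (m - w0) := by
      rw [hy1, hsc]
      simp only
      rw [smul_smul, mul_inv_cancel₀ (by intro h; linarith [(sub_eq_zero.1 h)]), one_smul]
    calc (1 - t1) * dot u y1 = dot u ((1 - t1) • y1) := (dot_smul_right _ _ _).symm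
      _ = dot u (w0 + t1 • (m - w0)) := by rw [h1]
      _ = dot u w0 + t1 * (dot u m - dot u w0) := by
          rw [dot_add_right, dot_smul_right, dot_sub_right]
  have humneg : dot u m < 0 := by
    rw [hy1u] at hkeyeq
    have h5 : t1 * dot u m < 0 := by nlinarith
    nlinarith
  obtain ⟨k, hk⟩ := dot_int hulat hm
  have hkm1 : dot u m = -1 := by
    have h1 : -1 ≤ dot u m := huP m hmP
    have hk1 : (-1:ℤ) ≤ k := by
      rw [hk] at h1
      exact_mod_cast h1
    have hk2 : k < 0 := by
      rw [hk] at humneg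
      exact_mod_cast humneg
    have : k = -1 := by omega
    rw [hk, this]
    norm_num
  have hmG : m ∈ G := by
    rw [hGdesc_u]
    exact ⟨hmP, hkm1⟩
  -- conclusion
  refine ⟨G, hGfacet, hmG, ⟨y1, hy1F, hy1G⟩, ?_⟩
  rw [direction_affineSpan]
  have hge : d - 2 ≤ Module.finrank ℝ (vectorSpan ℝ (F ∩ G)) := by
    rw [← hRrank']
    exact Submodule.finrank_mono (vectorSpan_mono ℝ (fun x hx => ⟨hRsub hx, hRG hx⟩))
  have hle2 : Module.finrank ℝ (vectorSpan ℝ (F ∩ G)) ≤ d - 2 := by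
    have hune : u ≠ η := by
      intro h
      apply hFG
      intro x hx
      rw [h]
      exact hη x hx
    have hK := inf_ker_finrank (η := η) (u := u) (y1 := y1) hune (hη y1 hy1F) hy1u
    refine le_trans (Submodule.finrank_mono ?_) hK
    refine le_inf ?_ ?_
    · exact vectorSpan_le_ker (γ := -1) (fun x hx => hη x hx.1)
    · exact vectorSpan_le_ker (γ := -1) (fun x hx => huG x hx.2)
  omega
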